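/- Let I = (i_tn, i_fp, i_fn, i_tp) be an importance and k > 0 a real number, and let I' = (k·i_tn, i_fp, i_fn, k·i_tp) be the importance obtained by multiplying both i_tn and i_tp by k. Then for every performance P at which R_I is defined, R_{I'} is defined at P and R_{I'}(P) = k·R_I(P) / ((k−1)·R_I(P) + 1); consequently, for any two performances P₁, P₂ at which R_I is defined, R_{I'}(P₁) ≤ R_{I'}(P₂) if and only if R_I(P₁) ≤ R_I(P₂). The same order-preservation conclusion holds for the importance I'' = (i_tn, k·i_fp, k·i_fn, i_tp), which satisfies R_{I''}(P) = R_I(P) / (R_I(P) + k·(1 − R_I(P))). -/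

import Mathlib

/-- Ranking score `R_I` of a performance `(tn, fp, fn, tp)` for the importance
`I = (itn, ifp, ifn, itp)`. -/
noncomputable def RI (itn ifp ifn itp tn fp fn tp : ℝ) : ℝ :=
  (itn * tn + itp * tp) / (itn * tn + ifp * fp + ifn * fn + itp * tp)

/-- Denominator of the ranking score `R_I`. -/
def RIDen (itn ifp ifn itp tn fp fn tp : ℝ) : ℝ :=
  itn * tn + ifp * fp + ifn * fn + itp * tp

lemma posk_aux (k N F : ℝ) (hk : 0 < k) (hN : 0 ≤ N) (hF : 0 ≤ F)
    (h : 0 < N + F) : 0 < k * N + F := by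
  rcases hN.lt_or_eq with h' | h'
  · nlinarith [mul_pos hk h']
  · nlinarith

lemma ord_aux (N₁ F₁ N₂ F₂ : ℝ) (h₁ : 0 < N₁ + F₁) (h₂ : 0 < N₂ + F₂) :
    N₁ / (N₁ + F₁) ≤ N₂ / (N₂ + F₂) ↔ N₁ * F₂ ≤ N₂ * F₁ := by
  rw [div_le_div_iff₀ h₁ h₂]
  constructor <;> intro h <;> nlinarith

lemma val1_aux (N F k : ℝ) (hk : 0 < k) (hN : 0 ≤ N) (hF : 0 ≤ F)
    (hD : 0 < N + F) :
    (k * N) / (k * N + F) =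
      k * (N / (N + F)) / ((k - 1) * (N / (N + F)) + 1) := by
  have h1 : 0 < k * N + F := posk_aux k N F hk hN hF hD
  have h2 : (k - 1) * (N / (N + F)) + 1 = (k * N + F) / (N + F) := by
    field_simp
    ring
  rw [h2]
  rw [eq_div_iff (by positivity : (k*N+F)/(N+F) ≠ 0)]
  field_simp

lemma val2_aux (N F k : ℝ) (hk : 0 < k) (hN : 0 ≤ N) (hF : 0 ≤ F)
    (hD : 0 < N + F) :
    N / (N + k * F) =
      (N / (N + F)) / ((N / (N + F)) + k * (1 - N / (N + F))) := by
  have h1 : 0 < N + k * F := by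
    have := posk_aux k F N hk hF hN (by linarith)
    linarith
  have h2 : (N / (N + F)) + k * (1 - N / (N + F)) = (N + k * F) / (N + F) := by
    field_simp
    ring
  rw [h2]
  rw [eq_div_iff (by positivity : (N+k*F)/(N+F) ≠ 0)]
  field_simp

/-- Multiplying both `itn` and `itp` (or both `ifp` and `ifn`) of an importance
by the same strictly positive constant `k` leads to another ranking score that
is monotonously increasing with the original one; in particular, the induced
performance ordering is unaffected. -/
theorem rankingScore_scaleInvariance
    (itn ifp ifn itp k : ℝ)
    (hitn : 0 ≤ itn) (hifp : 0 ≤ ifp) (hifn : 0 ≤ ifn) (hitp : 0 ≤ itp)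
    (hI1 : itn + itp ≠ 0) (hI2 : ifp + ifn ≠ 0) (hk : 0 < k) :
    -- value formula for I' = (k·itn, ifp, ifn, k·itp)
    (∀ tn fp fn tp : ℝ, 0 ≤ tn → 0 ≤ fp → 0 ≤ fn → 0 ≤ tp →
      tn + fp + fn + tp = 1 → RIDen itn ifp ifn itp tn fp fn tp ≠ 0 →
        RIDen (k * itn) ifp ifn (k * itp) tn fp fn tp ≠ 0 ∧
        RI (k * itn) ifp ifn (k * itp) tn fp fn tp =
          k * RI itn ifp ifn itp tn fp fn tp /
            ((k - 1) * RI itn ifp ifn itp tn fp fn tp + 1)) ∧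
    -- order preservation for I'
    (∀ tn₁ fp₁ fn₁ tp₁ tn₂ fp₂ fn₂ tp₂ : ℝ,
      0 ≤ tn₁ → 0 ≤ fp₁ → 0 ≤ fn₁ → 0 ≤ tp₁ → tn₁ + fp₁ + fn₁ + tp₁ = 1 →
      0 ≤ tn₂ → 0 ≤ fp₂ → 0 ≤ fn₂ → 0 ≤ tp₂ → tn₂ + fp₂ + fn₂ + tp₂ = 1 →
      RIDen itn ifp ifn itp tn₁ fp₁ fn₁ tp₁ ≠ 0 →
      RIDen itn ifp ifn itp tn₂ fp₂ fn₂ tp₂ ≠ 0 →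
        (RI (k * itn) ifp ifn (k * itp) tn₁ fp₁ fn₁ tp₁ ≤
            RI (k * itn) ifp ifn (k * itp) tn₂ fp₂ fn₂ tp₂ ↔
          RI itn ifp ifn itp tn₁ fp₁ fn₁ tp₁ ≤ RI itn ifp ifn itp tn₂ fp₂ fn₂ tp₂)) ∧
    -- value formula for I'' = (itn, k·ifp, k·ifn, itp)
    (∀ tn fp fn tp : ℝ, 0 ≤ tn → 0 ≤ fp → 0 ≤ fn → 0 ≤ tp →
      tn + fp + fn + tp = 1 → RIDen itn ifp ifn itp tn fp fn tp ≠ 0 →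
        RIDen itn (k * ifp) (k * ifn) itp tn fp fn tp ≠ 0 ∧
        RI itn (k * ifp) (k * ifn) itp tn fp fn tp =
          RI itn ifp ifn itp tn fp fn tp /
            (RI itn ifp ifn itp tn fp fn tp +
              k * (1 - RI itn ifp ifn itp tn fp fn tp))) ∧
    -- order preservation for I''
    (∀ tn₁ fp₁ fn₁ tp₁ tn₂ fp₂ fn₂ tp₂ : ℝ,
      0 ≤ tn₁ → 0 ≤ fp₁ → 0 ≤ fn₁ → 0 ≤ tp₁ → tn₁ + fp₁ + fn₁ + tp₁ = 1 →
      0 ≤ tn₂ → 0 ≤ fp₂ → 0 ≤ fn₂ → 0 ≤ tp₂ → tn₂ + fp₂ + fn₂ + tp₂ = 1 →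
      RIDen itn ifp ifn itp tn₁ fp₁ fn₁ tp₁ ≠ 0 →
      RIDen itn ifp ifn itp tn₂ fp₂ fn₂ tp₂ ≠ 0 →
        (RI itn (k * ifp) (k * ifn) itp tn₁ fp₁ fn₁ tp₁ ≤
            RI itn (k * ifp) (k * ifn) itp tn₂ fp₂ fn₂ tp₂ ↔
          RI itn ifp ifn itp tn₁ fp₁ fn₁ tp₁ ≤ RI itn ifp ifn itp tn₂ fp₂ fn₂ tp₂)) := by
  have nn : ∀ a b x y : ℝ, 0 ≤ a → 0 ≤ b → 0 ≤ x → 0 ≤ y → 0 ≤ a * x + b * y :=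
    fun a b x y ha hb hx hy => add_nonneg (mul_nonneg ha hx) (mul_nonneg hb hy)
  have dpos : ∀ tn fp fn tp : ℝ, 0 ≤ tn → 0 ≤ fp → 0 ≤ fn → 0 ≤ tp →
      RIDen itn ifp ifn itp tn fp fn tp ≠ 0 →
      0 < (itn * tn + itp * tp) + (ifp * fp + ifn * fn) := by
    intro tn fp fn tp htn hfp hfn htp hden
    have e : RIDen itn ifp ifn itp tn fp fn tp
        = (itn * tn + itp * tp) + (ifp * fp + ifn * fn) := by unfold RIDen; ring
    rw [e] at hden
    exact lt_of_le_of_ne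
      (add_nonneg (nn itn itp tn tp hitn hitp htn htp)
        (nn ifp ifn fp fn hifp hifn hfp hfn)) (Ne.symm hden)
  refine ⟨?_, ?_, ?_, ?_⟩
  · intro tn fp fn tp htn hfp hfn htp _ hden
    have hN := nn itn itp tn tp hitn hitp htn htp
    have hF := nn ifp ifn fp fn hifp hifn hfp hfn
    have hD := dpos tn fp fn tp htn hfp hfn htp hden
    have hk1 := posk_aux k _ _ hk hN hF hD
    constructor
    · have e : RIDen (k * itn) ifp ifn (k * itp) tn fp fn tp
          = k * (itn * tn + itp * tp) + (ifp * fp + ifn * fn) := by unfold RIDen; ring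
      rw [e]; exact hk1.ne'
    · have r0 : RI itn ifp ifn itp tn fp fn tp
          = (itn * tn + itp * tp) / ((itn * tn + itp * tp) + (ifp * fp + ifn * fn)) := by
        unfold RI; ring_nf
      have r1 : RI (k * itn) ifp ifn (k * itp) tn fp fn tp
          = (k * (itn * tn + itp * tp)) /
            (k * (itn * tn + itp * tp) + (ifp * fp + ifn * fn)) := by
        unfold RI; ring_nf
      rw [r0, r1]
      exact val1_aux _ _ _ hk hN hF hD
  · intro tn₁ fp₁ fn₁ tp₁ tn₂ fp₂ fn₂ tp₂ htn₁ hfp₁ hfn₁ htp₁ _ htn₂ hfp₂ hfn₂ htp₂ _ hd₁ hd₂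
    have hN₁ := nn itn itp tn₁ tp₁ hitn hitp htn₁ htp₁
    have hF₁ := nn ifp ifn fp₁ fn₁ hifp hifn hfp₁ hfn₁
    have hD₁ := dpos tn₁ fp₁ fn₁ tp₁ htn₁ hfp₁ hfn₁ htp₁ hd₁
    have hN₂ := nn itn itp tn₂ tp₂ hitn hitp htn₂ htp₂
    have hF₂ := nn ifp ifn fp₂ fn₂ hifp hifn hfp₂ hfn₂
    have hD₂ := dpos tn₂ fp₂ fn₂ tp₂ htn₂ hfp₂ hfn₂ htp₂ hd₂
    have r0₁ : RI itn ifp ifn itp tn₁ fp₁ fn₁ tp₁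
        = (itn * tn₁ + itp * tp₁) / ((itn * tn₁ + itp * tp₁) + (ifp * fp₁ + ifn * fn₁)) := by
      unfold RI; ring_nf
    have r0₂ : RI itn ifp ifn itp tn₂ fp₂ fn₂ tp₂
        = (itn * tn₂ + itp * tp₂) / ((itn * tn₂ + itp * tp₂) + (ifp * fp₂ + ifn * fn₂)) := by
      unfold RI; ring_nf
    have r1₁ : RI (k * itn) ifp ifn (k * itp) tn₁ fp₁ fn₁ tp₁
        = (k * (itn * tn₁ + itp * tp₁)) /
          ((k * (itn * tn₁ + itp * tp₁)) + (ifp * fp₁ + ifn * fn₁)) := by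
      unfold RI; ring_nf
    have r1₂ : RI (k * itn) ifp ifn (k * itp) tn₂ fp₂ fn₂ tp₂
        = (k * (itn * tn₂ + itp * tp₂)) /
          ((k * (itn * tn₂ + itp * tp₂)) + (ifp * fp₂ + ifn * fn₂)) := by
      unfold RI; ring_nf
    rw [r0₁, r0₂, r1₁, r1₂,
      ord_aux _ _ _ _ (posk_aux k _ _ hk hN₁ hF₁ hD₁) (posk_aux k _ _ hk hN₂ hF₂ hD₂),
      ord_aux _ _ _ _ hD₁ hD₂]
    rw [mul_assoc, mul_assoc, mul_le_mul_iff_right₀ hk]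
  · intro tn fp fn tp htn hfp hfn htp _ hden
    have hN := nn itn itp tn tp hitn hitp htn htp
    have hF := nn ifp ifn fp fn hifp hifn hfp hfn
    have hD := dpos tn fp fn tp htn hfp hfn htp hden
    have hk1 : 0 < (itn * tn + itp * tp) + k * (ifp * fp + ifn * fn) := by
      have := posk_aux k _ _ hk hF hN (by linarith)
      linarith
    constructor
    · have e : RIDen itn (k * ifp) (k * ifn) itp tn fp fn tp
          = (itn * tn + itp * tp) + k * (ifp * fp + ifn * fn) := by unfold RIDen; ring
      rw [e]; exact hk1.ne'
    · have r0 : RI itn ifp ifn itp tn fp fn tp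
          = (itn * tn + itp * tp) / ((itn * tn + itp * tp) + (ifp * fp + ifn * fn)) := by
        unfold RI; ring_nf
      have r2 : RI itn (k * ifp) (k * ifn) itp tn fp fn tp
          = (itn * tn + itp * tp) /
            ((itn * tn + itp * tp) + k * (ifp * fp + ifn * fn)) := by
        unfold RI; ring_nf
      rw [r0, r2]
      exact val2_aux _ _ _ hk hN hF hD
  · intro tn₁ fp₁ fn₁ tp₁ tn₂ fp₂ fn₂ tp₂ htn₁ hfp₁ hfn₁ htp₁ _ htn₂ hfp₂ hfn₂ htp₂ _ hd₁ hd₂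
    have hN₁ := nn itn itp tn₁ tp₁ hitn hitp htn₁ htp₁
    have hF₁ := nn ifp ifn fp₁ fn₁ hifp hifn hfp₁ hfn₁
    have hD₁ := dpos tn₁ fp₁ fn₁ tp₁ htn₁ hfp₁ hfn₁ htp₁ hd₁
    have hN₂ := nn itn itp tn₂ tp₂ hitn hitp htn₂ htp₂
    have hF₂ := nn ifp ifn fp₂ fn₂ hifp hifn hfp₂ hfn₂
    have hD₂ := dpos tn₂ fp₂ fn₂ tp₂ htn₂ hfp₂ hfn₂ htp₂ hd₂
    have hk1 : 0 < (itn * tn₁ + itp * tp₁) + k * (ifp * fp₁ + ifn * fn₁) := by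
      have := posk_aux k _ _ hk hF₁ hN₁ (by linarith)
      linarith
    have hk2 : 0 < (itn * tn₂ + itp * tp₂) + k * (ifp * fp₂ + ifn * fn₂) := by
      have := posk_aux k _ _ hk hF₂ hN₂ (by linarith)
      linarith
    have r0₁ : RI itn ifp ifn itp tn₁ fp₁ fn₁ tp₁
        = (itn * tn₁ + itp * tp₁) / ((itn * tn₁ + itp * tp₁) + (ifp * fp₁ + ifn * fn₁)) := by
      unfold RI; ring_nf
    have r0₂ : RI itn ifp ifn itp tn₂ fp₂ fn₂ tp₂
        = (itn * tn₂ + itp * tp₂) / ((itn * tn₂ + itp * tp₂) + (ifp * fp₂ + ifn * fn₂)) := by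
      unfold RI; ring_nf
    have r2₁ : RI itn (k * ifp) (k * ifn) itp tn₁ fp₁ fn₁ tp₁
        = (itn * tn₁ + itp * tp₁) /
          ((itn * tn₁ + itp * tp₁) + k * (ifp * fp₁ + ifn * fn₁)) := by
      unfold RI; ring_nf
    have r2₂ : RI itn (k * ifp) (k * ifn) itp tn₂ fp₂ fn₂ tp₂
        = (itn * tn₂ + itp * tp₂) /
          ((itn * tn₂ + itp * tp₂) + k * (ifp * fp₂ + ifn * fn₂)) := by
      unfold RI; ring_nf
    rw [r0₁, r0₂, r2₁, r2₂, ord_aux _ _ _ _ hk1 hk2, ord_aux _ _ _ _ hD₁ hD₂]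
    have e : ∀ x y : ℝ, x * (k * y) = k * (x * y) := fun x y => by ring
    rw [e, e, mul_le_mul_iff_right₀ hk]
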